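/- Let G be a connected graph on n vertices with m edges. Then ρ_D(G) ≥ 4(n−1) − 4m/n. -/

import Mathlib

open SimpleGraph Finset

/-- The transmission of a vertex: sum of distances to all other vertices. -/
noncomputable def transmission {V : Type*} [Fintype V] (G : SimpleGraph V) (u : V) : ℕ :=
  ∑ v, G.dist u v

/-- The transmission σ(G): sum of distances over all unordered pairs. -/
noncomputable def transmissionOf {V : Type*} [Fintype V] (G : SimpleGraph V) : ℝ :=
  (1 / 2) * ∑ u, ∑ v, (G.dist u v : ℝ)

/-- The distance signless Laplacian matrix Q_D(G) = Tr(G) + 𝒟(G). -/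
noncomputable def distSignlessLaplacian {V : Type*} [Fintype V] [DecidableEq V]
    (G : SimpleGraph V) : Matrix V V ℝ :=
  fun u v => (if u = v then (transmission G u : ℝ) else 0) + (G.dist u v : ℝ)

/-- `ρ` is the distance signless Laplacian spectral radius of `G`,
i.e. the largest eigenvalue of `Q_D(G)`. -/
noncomputable def IsDistSLSpectralRadius {V : Type*} [Fintype V] [DecidableEq V]
    (G : SimpleGraph V) (ρ : ℝ) : Prop :=
  IsGreatest {μ : ℝ | Module.End.HasEigenvalue (Matrix.toLin' (distSignlessLaplacian G)) μ} ρ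

/-- Join of two graphs. -/
def joinGraph {α β : Type*} (G : SimpleGraph α) (H : SimpleGraph β) : SimpleGraph (α ⊕ β) :=
  SimpleGraph.fromRel (fun x y =>
    match x, y with
    | Sum.inl a, Sum.inl b => G.Adj a b
    | Sum.inr a, Sum.inr b => H.Adj a b
    | Sum.inl _, Sum.inr _ => True
    | Sum.inr _, Sum.inl _ => False)

/-- The graph H_{t,n-t}. -/
def HGraph (n t : ℕ) : SimpleGraph (Fin n ⊕ Fin n) :=
  SimpleGraph.fromRel (fun x y =>
    match x, y with
    | Sum.inl i, Sum.inr j => (j : ℕ) < n - t ∨ (i : ℕ) < t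
    | _, _ => False)

/-- Hamilton-connected. -/
def IsHamiltonianConnected {V : Type*} [DecidableEq V] (G : SimpleGraph V) : Prop :=
  ∀ u v : V, u ≠ v → ∃ p : G.Walk u v, p.IsHamiltonian

/-- Traceable from every vertex. -/
def TraceableFromEveryVertex {V : Type*} [DecidableEq V] (G : SimpleGraph V) : Prop :=
  ∀ u : V, ∃ v : V, ∃ p : G.Walk u v, p.IsHamiltonian

/-- K_{n-1} + e : complete graph on n-1 vertices with a pendant edge. -/
def KPlusPendant (n : ℕ) : SimpleGraph (Fin (n - 1) ⊕ Fin 1) :=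
  SimpleGraph.fromRel (fun x y =>
    match x, y with
    | Sum.inl a, Sum.inl b => a ≠ b
    | Sum.inl a, Sum.inr _ => (a : ℕ) = 0
    | _, _ => False)

open Matrix in
/-- ρ_D(G) ≥ 4(n-1) - 4m/n for a connected graph. -/
theorem stmt_8 {V : Type*} [Fintype V] [DecidableEq V] (G : SimpleGraph V) [DecidableRel G.Adj]
    (hconn : G.Connected) (ρ : ℝ) (hρ : IsDistSLSpectralRadius G ρ) :
    4 * ((Fintype.card V : ℝ) - 1) - 4 * (G.edgeFinset.card : ℝ) / (Fintype.card V : ℝ) ≤ ρ := by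
  classical
  have hne : Nonempty V := hconn.nonempty
  set n : ℕ := Fintype.card V with hn
  have hnpos : 0 < (n : ℝ) := by exact_mod_cast Fintype.card_pos
  set A : Matrix V V ℝ := distSignlessLaplacian G with hAdef
  have hA : A.IsHermitian := by
    unfold Matrix.IsHermitian
    ext u v
    simp only [Matrix.conjTranspose_apply, star_trivial, hAdef, distSignlessLaplacian]
    rcases eq_or_ne u v with rfl | h
    · simp
    · simp [h, Ne.symm h, SimpleGraph.dist_comm]
  -- every eigenvalue is ≤ ρ
  have key : ∀ i : V, hA.eigenvalues i ≤ ρ := by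
    intro i
    apply hρ.2
    refine Module.End.hasEigenvalue_of_hasEigenvector
      (x := ((hA.eigenvectorBasis i : EuclideanSpace ℝ V) : V → ℝ)) ⟨?_, ?_⟩
    · rw [Module.End.mem_eigenspace_iff, Matrix.toLin'_apply]
      exact hA.mulVec_eigenvectorBasis i
    · intro h
      exact hA.eigenvectorBasis.orthonormal.ne_zero i (by ext j; exact congrFun h j)
  -- Rayleigh quotient with the all-ones vector
  set x : V → ℝ := fun _ => 1 with hx
  set U : Matrix V V ℝ := (hA.eigenvectorUnitary : Matrix V V ℝ) with hU
  have hUU : U * star U = 1 := Matrix.mem_unitaryGroup_iff.mp hA.eigenvectorUnitary.2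
  have hstar : star U = Uᵀ := by
    ext i j; simp [Matrix.conjTranspose_apply]
  set y : V → ℝ := star U *ᵥ x with hy
  have hdiag : Matrix.diagonal ((RCLike.ofReal : ℝ → ℝ) ∘ hA.eigenvalues)
      = Matrix.diagonal hA.eigenvalues := by
    congr 1
  have hS1 : x ⬝ᵥ (A *ᵥ x) = y ⬝ᵥ (Matrix.diagonal hA.eigenvalues *ᵥ y) := by
    conv_lhs => rw [hA.spectral_theorem, Unitary.conjStarAlgAut_apply]
    rw [← Matrix.mulVec_mulVec, ← Matrix.mulVec_mulVec, Matrix.dotProduct_mulVec, hdiag]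
    congr 1
    rw [hy, hstar, Matrix.mulVec_transpose]
  have hS2 : y ⬝ᵥ (Matrix.diagonal hA.eigenvalues *ᵥ y)
      = ∑ i, hA.eigenvalues i * (y i) ^ 2 := by
    simp only [dotProduct, Matrix.mulVec_diagonal]
    exact Finset.sum_congr rfl fun i _ => by ring
  have hyy : y ⬝ᵥ y = x ⬝ᵥ x := by
    have h1 : y ⬝ᵥ y = (x ᵥ* U) ⬝ᵥ (star U *ᵥ x) := by
      rw [hy, hstar, Matrix.mulVec_transpose]
    rw [h1, ← Matrix.dotProduct_mulVec, Matrix.mulVec_mulVec, hUU, Matrix.one_mulVec]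
  have hxx : x ⬝ᵥ x = (n : ℝ) := by simp [hx, dotProduct, hn]
  have hS3 : x ⬝ᵥ (A *ᵥ x) ≤ ρ * n := by
    rw [hS1, hS2]
    calc ∑ i, hA.eigenvalues i * (y i) ^ 2 ≤ ∑ i, ρ * (y i) ^ 2 :=
          Finset.sum_le_sum fun i _ => mul_le_mul_of_nonneg_right (key i) (sq_nonneg _)
      _ = ρ * (y ⬝ᵥ y) := by
          rw [dotProduct, Finset.mul_sum]
          exact Finset.sum_congr rfl fun i _ => by ring
      _ = ρ * n := by rw [hyy, hxx]
  -- the quadratic form is twice the sum of all distances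
  have hSsum : x ⬝ᵥ (A *ᵥ x) = ∑ u, ∑ v, A u v := by
    simp [dotProduct, Matrix.mulVec, hx]
  have hAsum : ∑ u, ∑ v, A u v = 2 * ∑ u, ∑ v, (G.dist u v : ℝ) := by
    have h1 : ∀ u : V, ∑ v, A u v = 2 * ∑ v, (G.dist u v : ℝ) := by
      intro u
      simp only [hAdef, distSignlessLaplacian, Finset.sum_add_distrib]
      rw [Finset.sum_ite_eq]
      simp [transmission]
      ring
    rw [Finset.sum_congr rfl fun u _ => h1 u, ← Finset.mul_sum]
  -- pointwise lower bound on distances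
  have hpair : ∀ u v : V,
      (if u = v then (0:ℝ) else 2) - (if G.Adj u v then 1 else 0) ≤ (G.dist u v : ℝ) := by
    intro u v
    rcases eq_or_ne u v with rfl | h
    · simp [G.irrefl]
    · by_cases hadj : G.Adj u v
      · have : G.dist u v = 1 := SimpleGraph.dist_eq_one_iff_adj.mpr hadj
        simp [h, hadj, this]
        norm_num
      · have h1 : 0 < G.dist u v := hconn.pos_dist_of_ne h
        have h2 : G.dist u v ≠ 1 := fun hd => hadj (SimpleGraph.dist_eq_one_iff_adj.mp hd)
        have h3 : 2 ≤ G.dist u v := by omega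
        have : (2:ℝ) ≤ (G.dist u v : ℝ) := by exact_mod_cast h3
        simp [h, hadj]
        linarith
  -- sum the lower bound
  have hadjsum : ∑ u : V, ∑ v : V, (if G.Adj u v then (1:ℝ) else 0)
      = 2 * (G.edgeFinset.card : ℝ) := by
    have h1 : ∀ u : V, ∑ v : V, (if G.Adj u v then (1:ℝ) else 0) = (G.degree u : ℝ) := by
      intro u
      rw [SimpleGraph.degree]
      rw [show G.neighborFinset u = Finset.univ.filter (G.Adj u) by
        ext v; simp [SimpleGraph.mem_neighborFinset]]
      simp [Finset.sum_ite_eq, Finset.sum_boole]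
    rw [Finset.sum_congr rfl fun u _ => h1 u, ← Nat.cast_sum,
      G.sum_degrees_eq_twice_card_edges]
    push_cast
    ring
  have hitesum : ∀ u : V, ∑ v : V, (if u = v then (0:ℝ) else 2) = 2 * (n:ℝ) - 2 := by
    intro u
    have : ∀ v : V, (if u = v then (0:ℝ) else 2) = 2 - (if u = v then 2 else 0) := by
      intro v; split_ifs <;> ring
    rw [Finset.sum_congr rfl fun v _ => this v, Finset.sum_sub_distrib, Finset.sum_ite_eq]
    simp [hn, mul_comm]
  have hdistsum : 2 * (n:ℝ) * ((n:ℝ) - 1) - 2 * (G.edgeFinset.card : ℝ)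
      ≤ ∑ u, ∑ v, (G.dist u v : ℝ) := by
    have := Finset.sum_le_sum (s := (Finset.univ : Finset V))
      (fun u _ => Finset.sum_le_sum (s := (Finset.univ : Finset V)) fun v _ => hpair u v)
    calc 2 * (n:ℝ) * ((n:ℝ) - 1) - 2 * (G.edgeFinset.card : ℝ)
        = ∑ u : V, ∑ v : V,
            ((if u = v then (0:ℝ) else 2) - (if G.Adj u v then 1 else 0)) := by
          simp only [Finset.sum_sub_distrib]
          rw [Finset.sum_congr rfl fun u (_ : u ∈ Finset.univ) => hitesum u, hadjsum]
          simp [hn]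
          ring
      _ ≤ _ := this
  -- put everything together
  have hfinal : 4 * (n:ℝ) * ((n:ℝ) - 1) - 4 * (G.edgeFinset.card : ℝ) ≤ ρ * n := by
    calc 4 * (n:ℝ) * ((n:ℝ) - 1) - 4 * (G.edgeFinset.card : ℝ)
        = 2 * (2 * (n:ℝ) * ((n:ℝ) - 1) - 2 * (G.edgeFinset.card : ℝ)) := by ring
      _ ≤ 2 * ∑ u, ∑ v, (G.dist u v : ℝ) := by linarith
      _ = x ⬝ᵥ (A *ᵥ x) := by rw [hSsum, hAsum]
      _ ≤ ρ * n := hS3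
  rw [show 4 * ((Fintype.card V : ℝ) - 1) - 4 * (G.edgeFinset.card : ℝ) / (Fintype.card V : ℝ)
      = (4 * (n:ℝ) * ((n:ℝ) - 1) - 4 * (G.edgeFinset.card : ℝ)) / n by
    rw [hn]; field_simp]
  rw [div_le_iff₀ hnpos]
  exact hfinal
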